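/- Let H be an order in a definite rational quaternion division algebra A, and let I be a nonzero left ideal of H. If γ ∈ I has minimal positive reduced norm among nonzero elements of I, and for every ρ ∈ A \ H there exist α, β ∈ H with 0 < N(αρ − β) < 1, then I = Hγ. -/

import Mathlib

open Quaternion

/-- Reduced norm on the definite quaternion algebra `(−a,−b / ℚ)`. -/
def qN (a b : ℚ) (x : ℍ[ℚ, -a, -b]) : ℚ := (x * star x).re

/-- `H` is an order: finitely generated as an additive group, and a full lattice. -/
def IsOrder (a b : ℚ) (H : Subring ℍ[ℚ, -a, -b]) : Prop :=
  H.toAddSubgroup.FG ∧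
    ∀ x : ℍ[ℚ, -a, -b], ∃ n : ℕ, 0 < n ∧ (n : ℍ[ℚ, -a, -b]) * x ∈ H

/-- `H` is a left principal ideal domain: every left ideal is principal. -/
def IsLeftPID (a b : ℚ) (H : Subring ℍ[ℚ, -a, -b]) : Prop :=
  ∀ I : Set ℍ[ℚ, -a, -b],
    (I ⊆ H ∧ (0 : ℍ[ℚ, -a, -b]) ∈ I ∧ (∀ x ∈ I, ∀ y ∈ I, x + y ∈ I) ∧
      (∀ h ∈ H, ∀ x ∈ I, h * x ∈ I)) →
    ∃ γ ∈ H, I = {x | ∃ h ∈ H, x = h * γ}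

lemma qN_explicit (a b : ℚ) (x : ℍ[ℚ, -a, -b]) :
    qN a b x = x.re^2 + a * x.imI^2 + b * x.imJ^2 + a*b * x.imK^2 := by
  simp [qN, QuaternionAlgebra.re_mul]; ring

lemma qN_pos (a b : ℚ) (ha : 0 < a) (hb : 0 < b) (x : ℍ[ℚ, -a, -b]) (hx : x ≠ 0) :
    0 < qN a b x := by
  rw [qN_explicit]
  rcases lt_or_eq_of_le (show (0:ℚ) ≤ x.re^2 + a * x.imI^2 + b * x.imJ^2 + a*b*x.imK^2 by positivity) with h | h
  · exact h
  · exfalso; apply hx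
    have h1 : x.re^2 = 0 := by nlinarith [sq_nonneg x.re, sq_nonneg x.imI, sq_nonneg x.imJ, sq_nonneg x.imK, mul_pos ha hb]
    have h2 : x.imI^2 = 0 := by nlinarith [sq_nonneg x.re, sq_nonneg x.imI, sq_nonneg x.imJ, sq_nonneg x.imK, mul_pos ha hb]
    have h3 : x.imJ^2 = 0 := by nlinarith [sq_nonneg x.re, sq_nonneg x.imI, sq_nonneg x.imJ, sq_nonneg x.imK, mul_pos ha hb]
    have h4 : x.imK^2 = 0 := by nlinarith [sq_nonneg x.re, sq_nonneg x.imI, sq_nonneg x.imJ, sq_nonneg x.imK, mul_pos ha hb]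
    rw [pow_eq_zero_iff (two_ne_zero)] at h1 h2 h3 h4
    ext <;> simp [h1, h2, h3, h4]

lemma mul_star_coe (a b : ℚ) (x : ℍ[ℚ, -a, -b]) :
    x * star x = ((qN a b x : ℚ) : ℍ[ℚ, -a, -b]) := x.mul_star_eq_coe

lemma qN_mul (a b : ℚ) (x y : ℍ[ℚ, -a, -b]) :
    qN a b (x * y) = qN a b x * qN a b y := by
  have : (x*y) * star (x*y) = ((qN a b x * qN a b y : ℚ) : ℍ[ℚ, -a, -b]) := by
    rw [StarMul.star_mul, mul_assoc, ← mul_assoc y, mul_star_coe,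
      QuaternionAlgebra.coe_commutes, ← mul_assoc, mul_star_coe,
      ← QuaternionAlgebra.coe_mul, mul_comm]
  rw [qN, this]; simp

theorem stmt_3 (a b : ℚ) (ha : 0 < a) (hb : 0 < b)
    (H : Subring ℍ[ℚ, -a, -b]) (hH : IsOrder a b H)
    (I : Set ℍ[ℚ, -a, -b])
    (hI : I ⊆ H ∧ (0 : ℍ[ℚ, -a, -b]) ∈ I ∧ (∀ x ∈ I, ∀ y ∈ I, x + y ∈ I) ∧
      (∀ h ∈ H, ∀ x ∈ I, h * x ∈ I))
    (hne : ∃ x ∈ I, x ≠ 0)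
    (γ : ℍ[ℚ, -a, -b]) (hγI : γ ∈ I) (hγ0 : γ ≠ 0)
    (hmin : ∀ x ∈ I, x ≠ 0 → qN a b γ ≤ qN a b x)
    (hDH : ∀ ρ : ℍ[ℚ, -a, -b], ρ ∉ H →
      ∃ α ∈ H, ∃ β ∈ H, 0 < qN a b (α * ρ - β) ∧ qN a b (α * ρ - β) < 1) :
    I = {x | ∃ h ∈ H, x = h * γ} := by
  obtain ⟨hIH, h0I, haddI, hmulI⟩ := hI
  have hγpos : 0 < qN a b γ := qN_pos a b ha hb γ hγ0
  -- inverse of γ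
  set γinv : ℍ[ℚ, -a, -b] := ((qN a b γ)⁻¹ : ℚ) • star γ with hγinv
  have hinvγ : γinv * γ = 1 := by
    rw [hγinv, smul_mul_assoc, show star γ * γ = ((qN a b γ : ℚ) : ℍ[ℚ, -a, -b]) by
      rw [star_comm_self', mul_star_coe]]
    rw [QuaternionAlgebra.smul_coe, inv_mul_cancel₀ hγpos.ne']
    simp
  ext x
  simp only [Set.mem_setOf_eq]
  constructor
  · intro hxI
    set ρ : ℍ[ℚ, -a, -b] := x * γinv with hρ
    have hργ : ρ * γ = x := by rw [hρ, mul_assoc, hinvγ, mul_one]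
    by_cases hρH : ρ ∈ H
    · exact ⟨ρ, hρH, hργ.symm⟩
    · exfalso
      obtain ⟨α, hα, β, hβ, hpos, hlt⟩ := hDH ρ hρH
      set y : ℍ[ℚ, -a, -b] := (α * ρ - β) * γ with hy
      have hyI : y ∈ I := by
        have : y = α * x + (-β) * γ := by
          rw [hy, sub_mul, mul_assoc, hργ, neg_mul, sub_eq_add_neg]
        rw [this]
        exact haddI _ (hmulI α hα x hxI) _ (hmulI (-β) (H.neg_mem hβ) γ hγI)
      have hyN : qN a b y = qN a b (α * ρ - β) * qN a b γ := qN_mul a b _ γ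
      have hy0 : y ≠ 0 := by
        intro h
        rw [h] at hyN
        have : qN a b (0 : ℍ[ℚ, -a, -b]) = 0 := by simp [qN]
        nlinarith
      have hle := hmin y hyI hy0
      nlinarith
  · rintro ⟨h, hh, rfl⟩
    exact hmulI h hh γ hγI
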